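/- Let s ∈ (0,1) and r ∈ [2, 4−2s]. There exists a constant C = C(r,s) > 0 such that for all λ > 0, all Δt > 0 and every positive integer N, setting T := NΔt, t_j := jΔt and φ(t) := e^{−λt}, the piecewise-linear interpolant I[φ] of φ on the uniform grid satisfies |∫_0^T (I[φ](t) − φ(t)) t^{s−1} dt| ≤ C · λ^{r/2} · Δt^{s + r/2}. The constant C is independent of λ, Δt and N. -/

import Mathlib

open Real MeasureTheory intervalIntegral

/-- The piecewise-linear interpolant of `φ` on the uniform grid `t_j = jΔt`:
`I[φ](t) = ((t_{j+1}−t)/Δt)·φ(t_j) + ((t−t_j)/Δt)·φ(t_{j+1})` for `t ∈ [t_j, t_{j+1})`. -/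
noncomputable def plInterp (Δt : ℝ) (φ : ℝ → ℝ) (t : ℝ) : ℝ :=
  ((((⌊t / Δt⌋₊ : ℝ) + 1) * Δt - t) / Δt) * φ ((⌊t / Δt⌋₊ : ℝ) * Δt) +
    ((t - (⌊t / Δt⌋₊ : ℝ) * Δt) / Δt) * φ (((⌊t / Δt⌋₊ : ℝ) + 1) * Δt)

lemma exp_neg_le_quad {x : ℝ} (hx : 0 ≤ x) : Real.exp (-x) - 1 + x ≤ x ^ 2 := by
  rcases le_or_gt x 1 with h | h
  · have hb := Real.exp_bound (x := -x) (by rwa [abs_neg, abs_of_nonneg hx]) (n := 2) (by norm_num)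
    have hsum : ∑ m ∈ Finset.range 2, (-x) ^ m / (m.factorial : ℝ) = 1 - x := by
      simp [Finset.sum_range_succ]; ring
    rw [hsum, abs_neg, abs_of_nonneg hx] at hb
    have hb' := (abs_le.mp hb).2
    have : ((Nat.succ 2 : ℕ) : ℝ) / ((Nat.factorial 2 : ℕ) * (2:ℕ)) = 3/4 := by norm_num [Nat.factorial]
    rw [this] at hb'
    nlinarith [sq_nonneg x]
  · have h1 : Real.exp (-x) ≤ 1 := Real.exp_le_one_iff.mpr (by linarith)
    nlinarith

lemma g_nonneg {θ x : ℝ} (h0 : 0 ≤ θ) (h1 : θ ≤ 1) :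
    Real.exp (-(θ * x)) ≤ (1 - θ) + θ * Real.exp (-x) := by
  have := convexOn_exp.2 (Set.mem_univ (0:ℝ)) (Set.mem_univ (-x))
    (by linarith : (0:ℝ) ≤ 1 - θ) h0 (by ring)
  simpa [smul_eq_mul, mul_comm] using this

lemma g_le {θ x : ℝ} (h0 : 0 ≤ θ) (h1 : θ ≤ 1) (hx : 0 ≤ x) :
    (1 - θ) + θ * Real.exp (-x) - Real.exp (-(θ * x)) ≤ min 1 (x ^ 2) := by
  have hE1 : Real.exp (-x) ≤ 1 := Real.exp_le_one_iff.mpr (by linarith)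
  have hF : 0 < Real.exp (-(θ * x)) := Real.exp_pos _
  refine le_min (by nlinarith) ?_
  have h2 : 1 - Real.exp (-(θ * x)) ≤ θ * x := by
    have := Real.add_one_le_exp (-(θ * x)); linarith
  have h3 : Real.exp (-x) - 1 + x ≤ x ^ 2 := exp_neg_le_quad hx
  have h4 : 0 ≤ Real.exp (-x) - 1 + x := by
    have := Real.add_one_le_exp (-x); linarith
  nlinarith [mul_nonneg (by linarith : (0:ℝ) ≤ 1 - θ) h4]

lemma err_bound (lam Δt t : ℝ) (hl : 0 < lam) (hd : 0 < Δt) (ht : 0 ≤ t) :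
    |plInterp Δt (fun u => Real.exp (-lam * u)) t - Real.exp (-lam * t)|
      ≤ min 1 ((lam * Δt) ^ 2) * Real.exp (-lam * ((⌊t / Δt⌋₊ : ℝ) * Δt)) := by
  set j : ℝ := (⌊t / Δt⌋₊ : ℝ) with hj
  set a : ℝ := j * Δt with ha
  set θ : ℝ := (t - a) / Δt with hθ
  have ha0 : 0 ≤ a := by positivity
  have hat : a ≤ t := by
    have h1 : j ≤ t / Δt := Nat.floor_le (by positivity)
    calc a = j * Δt := rfl
      _ ≤ (t / Δt) * Δt := by nlinarith
      _ = t := by field_simp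
  have htlt : t < a + Δt := by
    have h1 : t / Δt < j + 1 := Nat.lt_floor_add_one (t / Δt)
    have := (div_lt_iff₀ hd).mp h1
    nlinarith
  have hθ0 : 0 ≤ θ := div_nonneg (by linarith) hd.le
  have hθ1 : θ ≤ 1 := by rw [hθ, div_le_one hd]; linarith
  have hθx : θ * (lam * Δt) = lam * (t - a) := by
    rw [hθ]; field_simp
  have key : plInterp Δt (fun u => Real.exp (-lam * u)) t - Real.exp (-lam * t)
      = Real.exp (-lam * a) *
        ((1 - θ) + θ * Real.exp (-(lam * Δt)) - Real.exp (-(θ * (lam * Δt)))) := by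
    have e1 : Real.exp (-lam * ((j + 1) * Δt)) = Real.exp (-lam * a) * Real.exp (-(lam * Δt)) := by
      rw [← Real.exp_add]; congr 1; rw [ha]; ring
    have e2 : Real.exp (-lam * t) = Real.exp (-lam * a) * Real.exp (-(θ * (lam * Δt))) := by
      rw [← Real.exp_add]; congr 1; rw [hθx]; ring
    have h1 : ((j + 1) * Δt - t) / Δt = 1 - θ := by
      rw [hθ, ha]; field_simp; ring
    have h2 : (t - j * Δt) / Δt = θ := by rw [hθ, ha]
    simp only [plInterp, ← hj]
    rw [e1, e2, h1, h2]; ring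
  rw [key, abs_mul, abs_of_nonneg (Real.exp_pos _).le]
  rw [mul_comm]
  apply mul_le_mul_of_nonneg_right _ (Real.exp_pos _).le
  rw [abs_of_nonneg (by have := g_nonneg hθ0 hθ1 (x := lam * Δt); linarith)]
  exact g_le hθ0 hθ1 (by positivity)

lemma core_est (s r x Γs : ℝ) (hs0 : 0 < s) (hs1 : s < 1) (hr2 : 2 ≤ r)
    (hr4 : r ≤ 4 - 2 * s) (hx : 0 < x) (hΓ : 0 < Γs) :
    min 1 (x ^ 2) * (1 / s) + min 1 (x ^ 2) * (2 ^ s * Γs / x ^ s)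
      ≤ (1 / s + 2 * Γs) * x ^ (r / 2) := by
  have h2s : (2:ℝ) ^ s ≤ 2 := by
    calc (2:ℝ) ^ s ≤ 2 ^ (1:ℝ) := rpow_le_rpow_of_exponent_le one_le_two hs1.le
      _ = 2 := rpow_one 2
  have h2s0 : (0:ℝ) < 2 ^ s := rpow_pos_of_pos two_pos s
  have hxs0 : (0:ℝ) < x ^ s := rpow_pos_of_pos hx s
  have hm0 : 0 ≤ min 1 (x ^ 2) := le_min zero_le_one (by positivity)
  rcases le_or_gt x 1 with h | h
  · have hm : min 1 (x ^ 2) ≤ x ^ 2 := min_le_right _ _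
    have hx2 : x ^ 2 = x ^ ((2:ℝ)) := by
      rw [← Real.rpow_natCast x 2]; norm_num
    have e1 : x ^ ((2:ℝ)) ≤ x ^ (r / 2) :=
      Real.rpow_le_rpow_of_exponent_ge hx h (by linarith)
    have e2 : x ^ ((2:ℝ)) / x ^ s = x ^ (2 - s) := by
      rw [← Real.rpow_sub hx]
    have e3 : x ^ (2 - s) ≤ x ^ (r / 2) :=
      Real.rpow_le_rpow_of_exponent_ge hx h (by linarith)
    have t1 : min 1 (x ^ 2) * (1 / s) ≤ x ^ (r / 2) * (1 / s) := by
      apply mul_le_mul_of_nonneg_right _ (by positivity)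
      exact le_trans (hm.trans_eq hx2) e1
    have t2 : min 1 (x ^ 2) * (2 ^ s * Γs / x ^ s) ≤ 2 * Γs * x ^ (r / 2) := by
      calc min 1 (x ^ 2) * (2 ^ s * Γs / x ^ s)
          ≤ x ^ 2 * (2 ^ s * Γs / x ^ s) := by
            apply mul_le_mul_of_nonneg_right hm (by positivity)
        _ = 2 ^ s * Γs * (x ^ ((2:ℝ)) / x ^ s) := by rw [hx2]; ring
        _ = 2 ^ s * Γs * x ^ (2 - s) := by rw [e2]
        _ ≤ 2 * Γs * x ^ (r / 2) := by
            have := Real.rpow_nonneg hx.le (2 - s)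
            have h1 : 2 ^ s * Γs * x ^ (2 - s) ≤ 2 * Γs * x ^ (2 - s) := by
              apply mul_le_mul_of_nonneg_right _ this
              nlinarith
            have h2 : 2 * Γs * x ^ (2 - s) ≤ 2 * Γs * x ^ (r / 2) := by nlinarith
            linarith
    linarith [t1, t2]
  · have hm : min 1 (x ^ 2) ≤ 1 := min_le_left _ _
    have hxs : 1 ≤ x ^ s := Real.one_le_rpow h.le hs0.le
    have hxr : 1 ≤ x ^ (r / 2) := Real.one_le_rpow h.le (by linarith)
    have t2 : 2 ^ s * Γs / x ^ s ≤ 2 * Γs := by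
      rw [div_le_iff₀ hxs0]
      nlinarith
    have t1 : min 1 (x ^ 2) * (1 / s) ≤ 1 / s :=
      (mul_le_of_le_one_left (by positivity) hm)
    have t3 : min 1 (x ^ 2) * (2 ^ s * Γs / x ^ s) ≤ 2 * Γs := by
      calc min 1 (x ^ 2) * (2 ^ s * Γs / x ^ s) ≤ 1 * (2 ^ s * Γs / x ^ s) := by
            apply mul_le_mul_of_nonneg_right hm (by positivity)
        _ = 2 ^ s * Γs / x ^ s := one_mul _
        _ ≤ 2 * Γs := t2
    have : (1 / s + 2 * Γs) * 1 ≤ (1 / s + 2 * Γs) * x ^ (r / 2) := by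
      apply mul_le_mul_of_nonneg_left hxr (by positivity)
    linarith

/-- Let `s ∈ (0,1)` and `r ∈ [2, 4−2s]`. There exists `C = C(r,s) > 0` such
that for all `λ > 0`, `Δt > 0` and every positive integer `N`, setting `T = NΔt` and
`φ(t) = e^{−λt}`, the piecewise-linear interpolant `I[φ]` of `φ` on the uniform grid
satisfies `|∫_0^T (I[φ](t) − φ(t)) t^{s−1} dt| ≤ C λ^{r/2} Δt^{s+r/2}`. -/
theorem stmt5 (s r : ℝ) (hs : s ∈ Set.Ioo (0:ℝ) 1) (hr : r ∈ Set.Icc (2:ℝ) (4 - 2*s)) :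
    ∃ C : ℝ, 0 < C ∧ ∀ lam Δt : ℝ, 0 < lam → 0 < Δt → ∀ N : ℕ, 0 < N →
      |∫ t in (0:ℝ)..((N:ℝ) * Δt),
          (plInterp Δt (fun u => Real.exp (-lam * u)) t - Real.exp (-lam * t)) * t ^ (s - 1)|
        ≤ C * lam ^ (r / 2) * Δt ^ (s + r / 2) := by
  obtain ⟨hs0, hs1⟩ := hs
  obtain ⟨hr2, hr4⟩ := hr
  have hΓ : 0 < Real.Gamma s := Real.Gamma_pos_of_pos hs0
  refine ⟨1 / s + 2 * Real.Gamma s, by positivity, ?_⟩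
  intro lam Δt hl hd N hN
  set T : ℝ := (N : ℝ) * Δt with hT
  have hN1 : (1:ℝ) ≤ (N:ℝ) := by exact_mod_cast hN
  have hdT : Δt ≤ T := by rw [hT]; nlinarith
  have hT0 : 0 < T := lt_of_lt_of_le hd hdT
  set m : ℝ := min 1 ((lam * Δt) ^ 2) with hm
  have hm0 : 0 ≤ m := le_min zero_le_one (by positivity)
  set f : ℝ → ℝ :=
    fun t => (plInterp Δt (fun u => Real.exp (-lam * u)) t - Real.exp (-lam * t)) * t ^ (s - 1)
    with hf
  -- measurability
  have hfloor : Measurable fun t : ℝ => ((⌊t / Δt⌋₊ : ℕ) : ℝ) :=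
    measurable_from_top.comp (Measurable.nat_floor (measurable_id.div_const Δt))
  have hplm : Measurable (plInterp Δt (fun u => Real.exp (-lam * u))) := by
    unfold plInterp
    fun_prop
  have hmeas : Measurable f := by
    rw [hf]
    apply Measurable.mul
    · exact hplm.sub (by fun_prop)
    · fun_prop
  -- pointwise bound by m * t ^ (s-1)
  have hEb : ∀ t : ℝ, 0 ≤ t →
      |plInterp Δt (fun u => Real.exp (-lam * u)) t - Real.exp (-lam * t)| ≤ m := by
    intro t ht
    refine (err_bound lam Δt t hl hd ht).trans ?_
    have h1 : Real.exp (-lam * ((⌊t / Δt⌋₊ : ℝ) * Δt)) ≤ 1 := by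
      apply Real.exp_le_one_iff.mpr
      have : (0:ℝ) ≤ (⌊t / Δt⌋₊ : ℝ) * Δt := by positivity
      nlinarith
    nlinarith [hm0]
  have hfb : ∀ t : ℝ, 0 < t → |f t| ≤ m * t ^ (s - 1) := by
    intro t ht
    rw [hf, abs_mul, abs_of_nonneg (Real.rpow_nonneg ht.le _)]
    exact mul_le_mul_of_nonneg_right (hEb t ht.le) (Real.rpow_nonneg ht.le _)
  have hrint : ∀ a b : ℝ, IntervalIntegrable (fun t : ℝ => t ^ (s - 1)) volume a b :=
    fun a b => intervalIntegral.intervalIntegrable_rpow' (by linarith)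
  have hfint : IntervalIntegrable f volume 0 T := by
    apply IntervalIntegrable.mono_fun ((hrint 0 T).const_mul m) hmeas.aestronglyMeasurable
    filter_upwards [ae_restrict_mem measurableSet_uIoc] with t ht
    rw [Set.uIoc_of_le hT0.le] at ht
    rw [Real.norm_eq_abs, Real.norm_eq_abs]
    refine (hfb t ht.1).trans ?_
    rw [abs_mul, abs_of_nonneg hm0, abs_of_nonneg (Real.rpow_nonneg ht.1.le _)]
  have hfint1 : IntervalIntegrable f volume 0 Δt :=
    hfint.mono_set (by
      rw [Set.uIcc_of_le hd.le, Set.uIcc_of_le hT0.le]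
      exact Set.Icc_subset_Icc le_rfl hdT)
  have hfint2 : IntervalIntegrable f volume Δt T :=
    hfint.mono_set (by
      rw [Set.uIcc_of_le hdT, Set.uIcc_of_le hT0.le]
      exact Set.Icc_subset_Icc hd.le le_rfl)
  have hsplit : ∫ t in (0:ℝ)..T, f t = (∫ t in (0:ℝ)..Δt, f t) + ∫ t in Δt..T, f t :=
    (intervalIntegral.integral_add_adjacent_intervals hfint1 hfint2).symm
  -- piece 1
  have hp1 : |∫ t in (0:ℝ)..Δt, f t| ≤ m * (Δt ^ s / s) := by
    have hb : IntervalIntegrable (fun t : ℝ => m * t ^ (s - 1)) volume 0 Δt :=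
      (hrint 0 Δt).const_mul m
    have h := intervalIntegral.norm_integral_le_abs_of_norm_le (μ := volume) (a := 0) (b := Δt)
      (f := f) (g := fun t => m * t ^ (s - 1)) ?_ hb
    · rw [Real.norm_eq_abs] at h
      refine h.trans ?_
      rw [intervalIntegral.integral_const_mul]
      have hv : ∫ t in (0:ℝ)..Δt, t ^ (s - 1) = Δt ^ s / s := by
        rw [integral_rpow (Or.inl (by linarith))]
        have h1 : s - 1 + 1 = s := by ring
        rw [h1, Real.zero_rpow hs0.ne', sub_zero]
      rw [hv, abs_of_nonneg (by positivity)]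
    · filter_upwards [ae_restrict_mem measurableSet_uIoc] with t ht
      rw [Set.uIoc_of_le hd.le] at ht
      rw [Real.norm_eq_abs]
      exact hfb t ht.1
  -- piece 2
  have hg2int : IntegrableOn (fun t : ℝ => t ^ (s - 1) * Real.exp (-(lam / 2) * t))
      (Set.Ioi 0) volume := by
    have h := integrableOn_rpow_mul_exp_neg_mul_rpow (s := s - 1) (p := 1)
      (by linarith) (by norm_num) (by positivity : (0:ℝ) < lam / 2)
    simpa [Real.rpow_one] using h
  have hg2val : ∫ t in Set.Ioi (0:ℝ), t ^ (s - 1) * Real.exp (-(lam / 2) * t)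
      = (lam / 2) ^ (-s) * Real.Gamma s := by
    have h := integral_rpow_mul_exp_neg_mul_rpow (p := 1) (q := s - 1)
      (by norm_num) (by linarith) (by positivity : (0:ℝ) < lam / 2)
    have h1 : s - 1 + 1 = s := by ring
    simpa [Real.rpow_one, h1] using h
  have hp2 : |∫ t in Δt..T, f t| ≤ m * ((lam / 2) ^ (-s) * Real.Gamma s) := by
    have hsub : Set.uIcc Δt T ⊆ Set.Ioi (0:ℝ) := by
      rw [Set.uIcc_of_le hdT]
      intro t ht
      exact lt_of_lt_of_le hd ht.1
    have hg2i : IntervalIntegrable (fun t : ℝ => m * (t ^ (s - 1) * Real.exp (-(lam / 2) * t)))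
        volume Δt T := ((hg2int.mono_set hsub).intervalIntegrable).const_mul m
    have hbd : ∀ t ∈ Set.Ioc Δt T, ‖f t‖ ≤ m * (t ^ (s - 1) * Real.exp (-(lam / 2) * t)) := by
      intro t ht
      have ht0 : 0 < t := lt_of_le_of_lt hd.le ht.1
      have hj1 : 1 ≤ ⌊t / Δt⌋₊ := by
        apply Nat.le_floor
        rw [Nat.cast_one, le_div_iff₀ hd]
        linarith [ht.1]
      have hj1' : (1:ℝ) ≤ (⌊t / Δt⌋₊ : ℝ) := by exact_mod_cast hj1
      have hfl : t / Δt < (⌊t / Δt⌋₊ : ℝ) + 1 := Nat.lt_floor_add_one _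
      have htj : t / 2 ≤ (⌊t / Δt⌋₊ : ℝ) * Δt := by
        have h2 : t < ((⌊t / Δt⌋₊ : ℝ) + 1) * Δt := by
          have := (div_lt_iff₀ hd).mp hfl
          linarith
        nlinarith
      have hexp : Real.exp (-lam * ((⌊t / Δt⌋₊ : ℝ) * Δt)) ≤ Real.exp (-(lam / 2) * t) := by
        apply Real.exp_le_exp.mpr
        nlinarith
      rw [Real.norm_eq_abs, hf, abs_mul, abs_of_nonneg (Real.rpow_nonneg ht0.le _)]
      calc |plInterp Δt (fun u => Real.exp (-lam * u)) t - Real.exp (-lam * t)| * t ^ (s - 1)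
          ≤ (m * Real.exp (-lam * ((⌊t / Δt⌋₊ : ℝ) * Δt))) * t ^ (s - 1) := by
            exact mul_le_mul_of_nonneg_right (err_bound lam Δt t hl hd ht0.le)
              (Real.rpow_nonneg ht0.le _)
        _ ≤ (m * Real.exp (-(lam / 2) * t)) * t ^ (s - 1) := by
            apply mul_le_mul_of_nonneg_right _ (Real.rpow_nonneg ht0.le _)
            exact mul_le_mul_of_nonneg_left hexp hm0
        _ = m * (t ^ (s - 1) * Real.exp (-(lam / 2) * t)) := by ring
    have h := intervalIntegral.norm_integral_le_abs_of_norm_le (μ := volume) (a := Δt) (b := T)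
      (f := f) (g := fun t => m * (t ^ (s - 1) * Real.exp (-(lam / 2) * t))) ?_ hg2i
    · rw [Real.norm_eq_abs] at h
      refine h.trans ?_
      rw [intervalIntegral.integral_const_mul]
      have hmono : ∫ t in Δt..T, t ^ (s - 1) * Real.exp (-(lam / 2) * t)
          ≤ (lam / 2) ^ (-s) * Real.Gamma s := by
        rw [intervalIntegral.integral_of_le hdT, ← hg2val]
        apply setIntegral_mono_set hg2int
        · filter_upwards [ae_restrict_mem measurableSet_Ioi] with t ht
          have : (0:ℝ) < t := ht
          positivity
        · exact HasSubset.Subset.eventuallyLE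
            (Set.Ioc_subset_Ioi_self.trans (Set.Ioi_subset_Ioi hd.le))
      have hnn : 0 ≤ ∫ t in Δt..T, t ^ (s - 1) * Real.exp (-(lam / 2) * t) := by
        apply intervalIntegral.integral_nonneg hdT
        intro t ht
        have ht0 : 0 < t := lt_of_lt_of_le hd ht.1
        positivity
      rw [abs_of_nonneg (mul_nonneg hm0 hnn)]
      exact mul_le_mul_of_nonneg_left hmono hm0
    · filter_upwards [ae_restrict_mem measurableSet_uIoc] with t ht
      rw [Set.uIoc_of_le hdT] at ht
      exact hbd t ht
  -- combine
  have hcomb : |∫ t in (0:ℝ)..T, f t|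
      ≤ m * (Δt ^ s / s) + m * ((lam / 2) ^ (-s) * Real.Gamma s) := by
    rw [hsplit]
    exact (abs_add_le _ _).trans (add_le_add hp1 hp2)
  refine hcomb.trans ?_
  -- final algebra
  set x : ℝ := lam * Δt with hxd
  have hx0 : 0 < x := by positivity
  have hΔs : 0 < Δt ^ s := Real.rpow_pos_of_pos hd s
  have hxs : 0 < x ^ s := Real.rpow_pos_of_pos hx0 s
  have hlamS : (lam / 2) ^ (-s) = 2 ^ s * (Δt ^ s / x ^ s) := by
    rw [Real.rpow_neg (by positivity), Real.div_rpow hl.le (by norm_num),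
      Real.mul_rpow hl.le hd.le]
    have hls : 0 < lam ^ s := Real.rpow_pos_of_pos hl s
    have h2s : 0 < (2:ℝ) ^ s := Real.rpow_pos_of_pos two_pos s
    field_simp
  have hrw : Δt ^ (s + r / 2) = Δt ^ s * Δt ^ (r / 2) := Real.rpow_add hd _ _
  have hxr : lam ^ (r / 2) * Δt ^ (r / 2) = x ^ (r / 2) := (Real.mul_rpow hl.le hd.le).symm
  have hcore := core_est s r x (Real.Gamma s) hs0 hs1 hr2 hr4 hx0 hΓ
  calc m * (Δt ^ s / s) + m * ((lam / 2) ^ (-s) * Real.Gamma s)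
      = (min 1 (x ^ 2) * (1 / s) + min 1 (x ^ 2) * (2 ^ s * Real.Gamma s / x ^ s)) * Δt ^ s := by
        rw [hm, hxd, hlamS]
        field_simp
        ring
    _ ≤ ((1 / s + 2 * Real.Gamma s) * x ^ (r / 2)) * Δt ^ s := by
        apply mul_le_mul_of_nonneg_right hcore hΔs.le
    _ = (1 / s + 2 * Real.Gamma s) * lam ^ (r / 2) * Δt ^ (s + r / 2) := by
        rw [hrw, ← hxr]; ring
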